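/- Let Ω > 0, B be real, t > 0, and define A(x,x') = (Ω cosh(Ωt)/(2 sinh(Ωt)))(|x|² + |x'|²) − (Ω cosh(Bt)/sinh(Ωt))(x·x') − i(Ω sinh(Bt)/sinh(Ωt))(x∧x') for x, x' ∈ ℝ², where x·x' = x₀x'₀ + x₁x'₁ and x∧x' = x₀x'₁ − x₁x'₀. Then the kernel K_t(x,x') = (Ω/(2π sinh(Ωt))) e^{−A(x,x')} satisfies the differential equation ∂K_t/∂t + H_x K_t = 0, where H = (1/2)[−∂₀² − ∂₁² + Ω²|x|² − 2iB(x₀∂₁ − x₁∂₀)] acts in the x variable. -/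

import Mathlib

set_option maxHeartbeats 1000000

open Real Complex

/-- The generalized Mehler kernel with magnetic term `B`. -/
noncomputable def mehlerK (Ω B : ℝ) (t x0 x1 y0 y1 : ℝ) : ℂ :=
  ((Ω / (2 * Real.pi * Real.sinh (Ω*t)) : ℝ) : ℂ) *
    Complex.exp (-(
      ((Ω * Real.cosh (Ω*t) / (2 * Real.sinh (Ω*t)) : ℝ) : ℂ)
        * (((x0^2 + x1^2 + y0^2 + y1^2 : ℝ)) : ℂ)
      - ((Ω * Real.cosh (B*t) / Real.sinh (Ω*t) : ℝ) : ℂ)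
        * (((x0*y0 + x1*y1 : ℝ)) : ℂ)
      - Complex.I * ((Ω * Real.sinh (B*t) / Real.sinh (Ω*t) : ℝ) : ℂ)
        * (((x0*y1 - x1*y0 : ℝ)) : ℂ)))

/-- First derivative of a Gaussian-type function of a real variable. -/
lemma hasDerivAt_quad_exp (N u v w : ℂ) (a : ℝ) :
    HasDerivAt (fun r : ℝ => N * Complex.exp (u * (r:ℂ)^2 + v * (r:ℂ) + w))
      ((2*u*(a:ℂ) + v) * (N * Complex.exp (u * (a:ℂ)^2 + v * (a:ℂ) + w))) a := by
  have h1 : HasDerivAt (fun z : ℂ => u * z^2 + v * z + w) (2*u*(a:ℂ) + v) (a:ℂ) := by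
    have := (((hasDerivAt_pow 2 (a:ℂ)).const_mul u).add ((hasDerivAt_id (a:ℂ)).const_mul v)).add_const w
    refine this.congr_deriv ?_
    push_cast; ring
  have h2 := (h1.cexp.const_mul N).comp_ofReal
  convert h2 using 1
  ring

lemma hasDerivAt_quad_exp' (N u v w : ℂ) (a : ℝ) :
    HasDerivAt (fun r : ℝ => (2*u*(r:ℂ) + v) * (N * Complex.exp (u * (r:ℂ)^2 + v * (r:ℂ) + w)))
      ((2*u + (2*u*(a:ℂ)+v)^2) * (N * Complex.exp (u * (a:ℂ)^2 + v * (a:ℂ) + w))) a := by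
  have h1 : HasDerivAt (fun z : ℂ => u * z^2 + v * z + w) (2*u*(a:ℂ) + v) (a:ℂ) := by
    have := (((hasDerivAt_pow 2 (a:ℂ)).const_mul u).add ((hasDerivAt_id (a:ℂ)).const_mul v)).add_const w
    refine this.congr_deriv ?_
    push_cast; ring
  have hlin : HasDerivAt (fun z : ℂ => 2*u*z + v) (2*u) (a:ℂ) := by
    have := ((hasDerivAt_id (a:ℂ)).const_mul (2*u)).add_const v
    refine this.congr_deriv ?_
    ring
  have h2 := (hlin.mul (h1.cexp.const_mul N)).comp_ofReal
  refine h2.congr_deriv ?_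
  ring

lemma deriv_quad_exp (N u v w : ℂ) (a : ℝ) :
    deriv (fun r : ℝ => N * Complex.exp (u * (r:ℂ)^2 + v * (r:ℂ) + w)) a
      = (2*u*(a:ℂ) + v) * (N * Complex.exp (u * (a:ℂ)^2 + v * (a:ℂ) + w)) :=
  (hasDerivAt_quad_exp N u v w a).deriv

lemma deriv2_quad_exp (N u v w : ℂ) (a : ℝ) :
    deriv (fun r : ℝ => deriv (fun r' : ℝ => N * Complex.exp (u * (r':ℂ)^2 + v * (r':ℂ) + w)) r) a
      = (2*u + (2*u*(a:ℂ)+v)^2) * (N * Complex.exp (u * (a:ℂ)^2 + v * (a:ℂ) + w)) := by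
  have h : (fun r : ℝ => deriv (fun r' : ℝ => N * Complex.exp (u * (r':ℂ)^2 + v * (r':ℂ) + w)) r)
      = fun r : ℝ => (2*u*(r:ℂ) + v) * (N * Complex.exp (u * (r:ℂ)^2 + v * (r:ℂ) + w)) :=
    funext fun r => deriv_quad_exp N u v w r
  rw [h, (hasDerivAt_quad_exp' N u v w a).deriv]

/-- The core polynomial identity behind the Mehler-kernel heat equation. -/
lemma mehler_poly_identity (O b s c sb cb j X0 X1 Y0 Y1 : ℂ)
    (hj : s * j = 1) (hc : c^2 = s^2 + 1) (hcb : cb^2 = sb^2 + 1) :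
    -(O*c*j)
    + (-( (O^2*(s^2-c^2)*j^2/2)*(X0^2+X1^2+Y0^2+Y1^2)
        - ((O*b*sb*s - O^2*cb*c)*j^2)*(X0*Y0+X1*Y1)
        - Complex.I*((O*b*cb*s - O^2*sb*c)*j^2)*(X0*Y1-X1*Y0)))
    + (1/2) * (
        -(2*(-(O*c*j/2)) + (2*(-(O*c*j/2))*X0 + (O*cb*j*Y0 + Complex.I*(O*sb*j)*Y1))^2)
        - (2*(-(O*c*j/2)) + (2*(-(O*c*j/2))*X1 + (O*cb*j*Y1 - Complex.I*(O*sb*j)*Y0))^2)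
        + O^2*(X0^2+X1^2)
        - 2*Complex.I*b*(X0*(2*(-(O*c*j/2))*X1 + (O*cb*j*Y1 - Complex.I*(O*sb*j)*Y0))
                        - X1*(2*(-(O*c*j/2))*X0 + (O*cb*j*Y0 + Complex.I*(O*sb*j)*Y1))))
    = 0 := by
  linear_combination (-(O^2/2)*(X0^2+X1^2)*(s*j+1) + b*(O*sb*j)*(X0*Y0+X1*Y1)
      + Complex.I*b*(O*cb*j)*(X0*Y1-X1*Y0)) * hj
    + ((O^2*j^2/2)*(Y0^2+Y1^2)) * hc
    + (-(O^2*j^2/2)*(Y0^2+Y1^2)) * hcb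
    + (O*j*b*sb*(X0*Y0+X1*Y1) - O^2*j^2*sb^2*(Y0^2+Y1^2)/2) * Complex.I_sq

theorem mehler_kernel_heat_equation (Ω B : ℝ) (hΩ : 0 < Ω)
    (t : ℝ) (ht : 0 < t) (x0 x1 y0 y1 : ℝ) :
    deriv (fun s => mehlerK Ω B s x0 x1 y0 y1) t
    + (1/2 : ℂ) *
      ( - deriv (fun a => deriv (fun a' => mehlerK Ω B t a' x1 y0 y1) a) x0
        - deriv (fun b => deriv (fun b' => mehlerK Ω B t x0 b' y0 y1) b) x1
        + ((Ω^2 : ℝ) : ℂ) * ((x0^2 + x1^2 : ℝ) : ℂ) * mehlerK Ω B t x0 x1 y0 y1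
        - 2 * Complex.I * (B : ℂ) *
          ( (x0 : ℂ) * deriv (fun b => mehlerK Ω B t x0 b y0 y1) x1
            - (x1 : ℂ) * deriv (fun a => mehlerK Ω B t a x1 y0 y1) x0 ) )
    = 0 := by
  have hspos : 0 < Real.sinh (Ω*t) := Real.sinh_pos_iff.mpr (by positivity)
  have hs : Real.sinh (Ω*t) ≠ 0 := ne_of_gt hspos
  have hπ : Real.pi ≠ 0 := Real.pi_ne_zero
  -- basic chain rules
  have hmulΩ : HasDerivAt (fun s : ℝ => Ω * s) Ω t := by
    simpa using (hasDerivAt_id t).const_mul Ω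
  have hmulB : HasDerivAt (fun s : ℝ => B * s) B t := by
    simpa using (hasDerivAt_id t).const_mul B
  have hsinhΩ : HasDerivAt (fun s => Real.sinh (Ω*s)) (Real.cosh (Ω*t) * Ω) t :=
    (Real.hasDerivAt_sinh (Ω*t)).comp t hmulΩ
  have hcoshΩ : HasDerivAt (fun s => Real.cosh (Ω*s)) (Real.sinh (Ω*t) * Ω) t :=
    (Real.hasDerivAt_cosh (Ω*t)).comp t hmulΩ
  have hsinhB : HasDerivAt (fun s => Real.sinh (B*s)) (Real.cosh (B*t) * B) t :=
    (Real.hasDerivAt_sinh (B*t)).comp t hmulB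
  have hcoshB : HasDerivAt (fun s => Real.cosh (B*s)) (Real.sinh (B*t) * B) t :=
    (Real.hasDerivAt_cosh (B*t)).comp t hmulB
  -- derivatives of the time-dependent coefficients
  have hg1 : HasDerivAt (fun s => Ω / (2 * Real.pi * Real.sinh (Ω*s)))
      (-(Ω^2 * Real.cosh (Ω*t)) / (2 * Real.pi * Real.sinh (Ω*t)^2)) t := by
    have hd : HasDerivAt (fun s => 2 * Real.pi * Real.sinh (Ω*s))
        (2 * Real.pi * (Real.cosh (Ω*t) * Ω)) t := hsinhΩ.const_mul (2 * Real.pi)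
    have := (hasDerivAt_const t Ω).div hd (by positivity)
    refine this.congr_deriv ?_
    field_simp
    ring
  have ha1 : HasDerivAt (fun s => Ω * Real.cosh (Ω*s) / (2 * Real.sinh (Ω*s)))
      (Ω^2 * (Real.sinh (Ω*t)^2 - Real.cosh (Ω*t)^2) / (2 * Real.sinh (Ω*t)^2)) t := by
    have hn : HasDerivAt (fun s => Ω * Real.cosh (Ω*s)) (Ω * (Real.sinh (Ω*t) * Ω)) t :=
      hcoshΩ.const_mul Ω
    have hd : HasDerivAt (fun s => 2 * Real.sinh (Ω*s)) (2 * (Real.cosh (Ω*t) * Ω)) t :=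
      hsinhΩ.const_mul 2
    have := hn.div hd (by positivity)
    refine this.congr_deriv ?_
    field_simp
  have ha2 : HasDerivAt (fun s => Ω * Real.cosh (B*s) / Real.sinh (Ω*s))
      ((Ω*B*Real.sinh (B*t)*Real.sinh (Ω*t) - Ω^2*Real.cosh (B*t)*Real.cosh (Ω*t)) / Real.sinh (Ω*t)^2) t := by
    have hn : HasDerivAt (fun s => Ω * Real.cosh (B*s)) (Ω * (Real.sinh (B*t) * B)) t :=
      hcoshB.const_mul Ω
    have := hn.div hsinhΩ hs
    refine this.congr_deriv ?_
    field_simp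
  have ha3 : HasDerivAt (fun s => Ω * Real.sinh (B*s) / Real.sinh (Ω*s))
      ((Ω*B*Real.cosh (B*t)*Real.sinh (Ω*t) - Ω^2*Real.sinh (B*t)*Real.cosh (Ω*t)) / Real.sinh (Ω*t)^2) t := by
    have hn : HasDerivAt (fun s => Ω * Real.sinh (B*s)) (Ω * (Real.cosh (B*t) * B)) t :=
      hsinhB.const_mul Ω
    have := hn.div hsinhΩ hs
    refine this.congr_deriv ?_
    field_simp
  -- derivative of the complex exponent
  have hA : HasDerivAt (fun s : ℝ => -(
      ((Ω * Real.cosh (Ω*s) / (2 * Real.sinh (Ω*s)) : ℝ) : ℂ)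
        * (((x0^2 + x1^2 + y0^2 + y1^2 : ℝ)) : ℂ)
      - ((Ω * Real.cosh (B*s) / Real.sinh (Ω*s) : ℝ) : ℂ)
        * (((x0*y0 + x1*y1 : ℝ)) : ℂ)
      - Complex.I * ((Ω * Real.sinh (B*s) / Real.sinh (Ω*s) : ℝ) : ℂ)
        * (((x0*y1 - x1*y0 : ℝ)) : ℂ)))
      (-(
      ((Ω^2 * (Real.sinh (Ω*t)^2 - Real.cosh (Ω*t)^2) / (2 * Real.sinh (Ω*t)^2) : ℝ) : ℂ)
        * (((x0^2 + x1^2 + y0^2 + y1^2 : ℝ)) : ℂ)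
      - (((Ω*B*Real.sinh (B*t)*Real.sinh (Ω*t) - Ω^2*Real.cosh (B*t)*Real.cosh (Ω*t)) / Real.sinh (Ω*t)^2 : ℝ) : ℂ)
        * (((x0*y0 + x1*y1 : ℝ)) : ℂ)
      - Complex.I * (((Ω*B*Real.cosh (B*t)*Real.sinh (Ω*t) - Ω^2*Real.sinh (B*t)*Real.cosh (Ω*t)) / Real.sinh (Ω*t)^2 : ℝ) : ℂ)
        * (((x0*y1 - x1*y0 : ℝ)) : ℂ))) t :=
    (((ha1.ofReal_comp.mul_const _).sub
      (ha2.ofReal_comp.mul_const _)).sub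
      ((ha3.ofReal_comp.const_mul Complex.I).mul_const _)).neg
  -- time derivative of the kernel
  have hKt : HasDerivAt (fun s => mehlerK Ω B s x0 x1 y0 y1)
      (((-(Ω^2 * Real.cosh (Ω*t)) / (2 * Real.pi * Real.sinh (Ω*t)^2) : ℝ) : ℂ) *
         Complex.exp (-(
      ((Ω * Real.cosh (Ω*t) / (2 * Real.sinh (Ω*t)) : ℝ) : ℂ)
        * (((x0^2 + x1^2 + y0^2 + y1^2 : ℝ)) : ℂ)
      - ((Ω * Real.cosh (B*t) / Real.sinh (Ω*t) : ℝ) : ℂ)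
        * (((x0*y0 + x1*y1 : ℝ)) : ℂ)
      - Complex.I * ((Ω * Real.sinh (B*t) / Real.sinh (Ω*t) : ℝ) : ℂ)
        * (((x0*y1 - x1*y0 : ℝ)) : ℂ)))
       + ((Ω / (2 * Real.pi * Real.sinh (Ω*t)) : ℝ) : ℂ) *
         (Complex.exp (-(
      ((Ω * Real.cosh (Ω*t) / (2 * Real.sinh (Ω*t)) : ℝ) : ℂ)
        * (((x0^2 + x1^2 + y0^2 + y1^2 : ℝ)) : ℂ)
      - ((Ω * Real.cosh (B*t) / Real.sinh (Ω*t) : ℝ) : ℂ)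
        * (((x0*y0 + x1*y1 : ℝ)) : ℂ)
      - Complex.I * ((Ω * Real.sinh (B*t) / Real.sinh (Ω*t) : ℝ) : ℂ)
        * (((x0*y1 - x1*y0 : ℝ)) : ℂ))) *
          (-(
      ((Ω^2 * (Real.sinh (Ω*t)^2 - Real.cosh (Ω*t)^2) / (2 * Real.sinh (Ω*t)^2) : ℝ) : ℂ)
        * (((x0^2 + x1^2 + y0^2 + y1^2 : ℝ)) : ℂ)
      - (((Ω*B*Real.sinh (B*t)*Real.sinh (Ω*t) - Ω^2*Real.cosh (B*t)*Real.cosh (Ω*t)) / Real.sinh (Ω*t)^2 : ℝ) : ℂ)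
        * (((x0*y0 + x1*y1 : ℝ)) : ℂ)
      - Complex.I * (((Ω*B*Real.cosh (B*t)*Real.sinh (Ω*t) - Ω^2*Real.sinh (B*t)*Real.cosh (Ω*t)) / Real.sinh (Ω*t)^2 : ℝ) : ℂ)
        * (((x0*y1 - x1*y0 : ℝ)) : ℂ))))) t := by
    simp only [mehlerK]
    exact hg1.ofReal_comp.mul hA.cexp
  -- spatial rewrites to canonical Gaussian form
  have hx0fun : (fun a : ℝ => mehlerK Ω B t a x1 y0 y1)
      = (fun a : ℝ => ((Ω:ℂ) / (2 * (Real.pi:ℂ) * (Real.sinh (Ω*t):ℂ))) * Complex.exp ((-((Ω:ℂ) * (Real.cosh (Ω*t):ℂ) / (2 * (Real.sinh (Ω*t):ℂ)))) * (a:ℂ)^2 + (((Ω:ℂ) * (Real.cosh (B*t):ℂ) / (Real.sinh (Ω*t):ℂ)) * (y0:ℂ) + Complex.I * ((Ω:ℂ) * (Real.sinh (B*t):ℂ) / (Real.sinh (Ω*t):ℂ)) * (y1:ℂ)) * (a:ℂ) + (-((Ω:ℂ) * (Real.cosh (Ω*t):ℂ) / (2 * (Real.sinh (Ω*t):ℂ)))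 * ((x1:ℂ)^2 + (y0:ℂ)^2 + (y1:ℂ)^2) + ((Ω:ℂ) * (Real.cosh (B*t):ℂ) / (Real.sinh (Ω*t):ℂ)) * (x1:ℂ) * (y1:ℂ) - Complex.I * ((Ω:ℂ) * (Real.sinh (B*t):ℂ) / (Real.sinh (Ω*t):ℂ)) * (x1:ℂ) * (y0:ℂ)))) := by
    funext a
    simp only [mehlerK]
    push_cast
    ring_nf
  have hx1fun : (fun b : ℝ => mehlerK Ω B t x0 b y0 y1)
      = (fun b : ℝ => ((Ω:ℂ) / (2 * (Real.pi:ℂ) * (Real.sinh (Ω*t):ℂ))) * Complex.exp ((-((Ω:ℂ) * (Real.cosh (Ω*t):ℂ) / (2 * (Real.sinh (Ω*t):ℂ)))) * (b:ℂ)^2 + (((Ω:ℂ) * (Real.cosh (B*t):ℂ) / (Real.sinh (Ω*t):ℂ)) * (y1:ℂ) - Complex.I * ((Ω:ℂ) * (Real.sinh (B*t):ℂ) / (Real.sinh (Ω*t):ℂ)) * (y0:ℂ)) * (b:ℂ) + (-((Ω:ℂ) * (Real.cosh (Ω*t):ℂ) / (2 * (Real.sinh (Ω*t):ℂ))) * ((x0:ℂ)^2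 + (y0:ℂ)^2 + (y1:ℂ)^2) + ((Ω:ℂ) * (Real.cosh (B*t):ℂ) / (Real.sinh (Ω*t):ℂ)) * (x0:ℂ) * (y0:ℂ) + Complex.I * ((Ω:ℂ) * (Real.sinh (B*t):ℂ) / (Real.sinh (Ω*t):ℂ)) * (x0:ℂ) * (y1:ℂ)))) := by
    funext b
    simp only [mehlerK]
    push_cast
    ring_nf
  have hM : mehlerK Ω B t x0 x1 y0 y1
      = ((Ω:ℂ) / (2 * (Real.pi:ℂ) * (Real.sinh (Ω*t):ℂ))) * Complex.exp ((-((Ω:ℂ) * (Real.cosh (Ω*t):ℂ) / (2 * (Real.sinh (Ω*t):ℂ)))) * (x0:ℂ)^2 + (((Ω:ℂ) * (Real.cosh (B*t):ℂ) / (Real.sinh (Ω*t):ℂ)) * (y0:ℂ) + Complex.I * ((Ω:ℂ) * (Real.sinh (B*t):ℂ) / (Real.sinh (Ω*t):ℂ)) * (y1:ℂ)) * (x0:ℂ) + (-((Ω:ℂ) * (Real.cosh (Ω*t):ℂ) / (2 * (Real.sinh (Ω*t):ℂ))) * ((x1:ℂ)^2 + (y0:ℂ)^2 + (y1:ℂ)^2)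 + ((Ω:ℂ) * (Real.cosh (B*t):ℂ) / (Real.sinh (Ω*t):ℂ)) * (x1:ℂ) * (y1:ℂ) - Complex.I * ((Ω:ℂ) * (Real.sinh (B*t):ℂ) / (Real.sinh (Ω*t):ℂ)) * (x1:ℂ) * (y0:ℂ))) := by
    have := congrFun hx0fun x0
    simpa using this
  -- exponential conversions
  have hE1 : Complex.exp ((-((Ω:ℂ) * (Real.cosh (Ω*t):ℂ) / (2 * (Real.sinh (Ω*t):ℂ)))) * (x1:ℂ)^2 + (((Ω:ℂ) * (Real.cosh (B*t):ℂ) / (Real.sinh (Ω*t):ℂ)) * (y1:ℂ) - Complex.I * ((Ω:ℂ) * (Real.sinh (B*t):ℂ) / (Real.sinh (Ω*t):ℂ)) * (y0:ℂ)) * (x1:ℂ) + (-((Ω:ℂ) * (Real.cosh (Ω*t):ℂ) / (2 * (Real.sinh (Ω*t):ℂ))) * ((x0:ℂ)^2 + (y0:ℂ)^2 + (y1:ℂ)^2) + ((Ω:ℂ) * (Real.cosh (B*t):ℂ) / (Real.sinh (Ω*t):ℂ)) * (x0:ℂ) * (y0:ℂ) + Complex.I * ((Ω:ℂ) * (Real.sinh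 (B*t):ℂ) / (Real.sinh (Ω*t):ℂ)) * (x0:ℂ) * (y1:ℂ)))
      = Complex.exp ((-((Ω:ℂ) * (Real.cosh (Ω*t):ℂ) / (2 * (Real.sinh (Ω*t):ℂ)))) * (x0:ℂ)^2 + (((Ω:ℂ) * (Real.cosh (B*t):ℂ) / (Real.sinh (Ω*t):ℂ)) * (y0:ℂ) + Complex.I * ((Ω:ℂ) * (Real.sinh (B*t):ℂ) / (Real.sinh (Ω*t):ℂ)) * (y1:ℂ)) * (x0:ℂ) + (-((Ω:ℂ) * (Real.cosh (Ω*t):ℂ) / (2 * (Real.sinh (Ω*t):ℂ))) * ((x1:ℂ)^2 + (y0:ℂ)^2 + (y1:ℂ)^2) + ((Ω:ℂ) * (Real.cosh (B*t):ℂ) / (Real.sinh (Ω*t):ℂ)) * (x1:ℂ) * (y1:ℂ) - Complex.I * ((Ω:ℂ) * (Real.sinh (B*t):ℂ) / (Real.sinh (Ω*t):ℂ)) * (x1:ℂ) * (y0:ℂ))) := by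
    congr 1
    ring
  have hE2 : Complex.exp (-(
      ((Ω * Real.cosh (Ω*t) / (2 * Real.sinh (Ω*t)) : ℝ) : ℂ)
        * (((x0^2 + x1^2 + y0^2 + y1^2 : ℝ)) : ℂ)
      - ((Ω * Real.cosh (B*t) / Real.sinh (Ω*t) : ℝ) : ℂ)
        * (((x0*y0 + x1*y1 : ℝ)) : ℂ)
      - Complex.I * ((Ω * Real.sinh (B*t) / Real.sinh (Ω*t) : ℝ) : ℂ)
        * (((x0*y1 - x1*y0 : ℝ)) : ℂ)))
      = Complex.exp ((-((Ω:ℂ) * (Real.cosh (Ω*t):ℂ) / (2 * (Real.sinh (Ω*t):ℂ)))) * (x0:ℂ)^2 + (((Ω:ℂ) * (Real.cosh (B*t):ℂ) / (Real.sinh (Ω*t):ℂ)) * (y0:ℂ) + Complex.I * ((Ω:ℂ) * (Real.sinh (B*t):ℂ) / (Real.sinh (Ω*t):ℂ)) * (y1:ℂ)) * (x0:ℂ) + (-((Ω:ℂ) * (Real.cosh (Ω*t):ℂ) / (2 * (Real.sinh (Ω*t):ℂ))) * ((x1:ℂ)^2 + (y0:ℂ)^2 + (y1:ℂ)^2) +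 ((Ω:ℂ) * (Real.cosh (B*t):ℂ) / (Real.sinh (Ω*t):ℂ)) * (x1:ℂ) * (y1:ℂ) - Complex.I * ((Ω:ℂ) * (Real.sinh (B*t):ℂ) / (Real.sinh (Ω*t):ℂ)) * (x1:ℂ) * (y0:ℂ))) := by
    congr 1
    push_cast
    ring
  -- hypotheses for the polynomial identity
  have hj : (Real.sinh (Ω*t) : ℂ) * ((Real.sinh (Ω*t) : ℂ))⁻¹ = 1 :=
    mul_inv_cancel₀ (by exact_mod_cast hs)
  have hc : (Real.cosh (Ω*t) : ℂ)^2 = (Real.sinh (Ω*t) : ℂ)^2 + 1 := by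
    have := Real.cosh_sq_sub_sinh_sq (Ω*t)
    have h' : (Real.cosh (Ω*t))^2 = (Real.sinh (Ω*t))^2 + 1 := by linarith [this]
    exact_mod_cast h'
  have hcb : (Real.cosh (B*t) : ℂ)^2 = (Real.sinh (B*t) : ℂ)^2 + 1 := by
    have := Real.cosh_sq_sub_sinh_sq (B*t)
    have h' : (Real.cosh (B*t))^2 = (Real.sinh (B*t))^2 + 1 := by linarith [this]
    exact_mod_cast h'
  -- rewrite everything
  rw [hKt.deriv, hx0fun, hx1fun, deriv2_quad_exp, deriv2_quad_exp, deriv_quad_exp,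
    deriv_quad_exp, hM, hE1, hE2]
  push_cast [-Complex.ofReal_cosh, -Complex.ofReal_sinh]
  linear_combination (Complex.exp ((-((Ω:ℂ) * (Real.cosh (Ω*t):ℂ) / (2 * (Real.sinh (Ω*t):ℂ)))) * (x0:ℂ)^2 + (((Ω:ℂ) * (Real.cosh (B*t):ℂ) / (Real.sinh (Ω*t):ℂ)) * (y0:ℂ) + Complex.I * ((Ω:ℂ) * (Real.sinh (B*t):ℂ) / (Real.sinh (Ω*t):ℂ)) * (y1:ℂ)) * (x0:ℂ) + (-((Ω:ℂ) * (Real.cosh (Ω*t):ℂ) / (2 * (Real.sinh (Ω*t):ℂ))) * ((x1:ℂ)^2 + (y0:ℂ)^2 + (y1:ℂ)^2) + ((Ω:ℂ) * (Real.cosh (B*t):ℂ) / (Real.sinh (Ω*t):ℂ)) * (x1:ℂ) * (y1:ℂ) - Complex.I * ((Ω:ℂ) * (Real.sinh (B*t):ℂ) / (Real.sinh (Ω*t):ℂ)) * (x1:ℂ) * (y0:ℂ))) * ((Ω:ℂ) / (2 * (Real.pi:ℂ) * (Real.sinh (Ω*t):ℂ)))) *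
    mehler_poly_identity (Ω:ℂ) (B:ℂ) (Real.sinh (Ω*t) : ℂ) (Real.cosh (Ω*t) : ℂ)
      (Real.sinh (B*t) : ℂ) (Real.cosh (B*t) : ℂ) ((Real.sinh (Ω*t) : ℂ))⁻¹
      (x0:ℂ) (x1:ℂ) (y0:ℂ) (y1:ℂ) hj hc hcb
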